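/- Let Θ be a split octonion algebra over k with Zorn basis ε_1, e_1, e_2, e_3, e_1*, e_2*, e_3*, ε_2, and let W = Span{ε_1, e_3} ⊆ Θ (a non-null isotropic 2-plane). The element X = ε_1 ∧ e_3* of the Lie algebra K = ker(κ: ∧²Θ → V_7) is nilpotent, annihilates e_1, e_2, e_1*, e_2* and ε_1, and satisfies X(e_3) = −ε_1; consequently the one-parameter unipotent subgroup exp(xX) ⊆ Spin(7) acts as the identity on W^⊥/W and acts on W = Span{ε_1, e_3} as the unipotent radical of a Borel subgroup of GL(W). -/

import Mathlib

/-!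
STATEMENT 19 (the key computation in the vanishing for non-null orbits):
Let Θ be a split octonion algebra over k (char 0), with Zorn-type basis elements
ε₁, e₁, e₂, e₃, e₁*, e₂*, e₃*, ε₂, and let W = Span{ε₁, e₃} ⊆ Θ (a non-null
isotropic 2-plane).  The element X = ε₁ ∧ e₃* of the Lie algebra
K = ker(κ : ∧²Θ → V₇) is nilpotent, annihilates e₁, e₂, e₁*, e₂* and ε₁, and
satisfies X(e₃) = −ε₁; consequently the one-parameter unipotent subgroup
exp(xX) ⊆ Spin(7) acts as the identity on W^⊥/W (i.e. X maps W^⊥ into W) and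
acts on W as the unipotent radical of a Borel subgroup of GL(W).

Formalization: split octonions = Cayley–Dickson over M₂(k) with γ = 1, with the
dictionary  ε₁ = (E₁₁,0), ε₂ = (E₂₂,0), e₃ = (E₁₂,0), e₃* = (E₂₁,0), and the four
remaining basis vectors e₁, e₂, e₁*, e₂* given by (0,E₁₁), (0,E₁₂), (0,E₂₁),
(0,E₂₂);  X acts as the element
T = T_{ε₁,e₃*} of so(Θ): z ↦ B(e₃*,z)·ε₁ − B(ε₁,z)·e₃*, where B is the norm
bilinear form.  X ∈ K is the statement Im(ε₁·(e₃*)*) = 0.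
-/

noncomputable section
open Matrix

/-- Octonions via the Cayley–Dickson construction over `M₂(k)` with parameter `γ`:
`Θ = B ⊕ B`, `B = M₂(k)`. -/
abbrev Oct (k : Type*) [Field k] := (Matrix (Fin 2) (Fin 2) k) × (Matrix (Fin 2) (Fin 2) k)

variable {k : Type*} [Field k]

/-- The 2×2 adjugate/quaternion conjugate `h' = tr(h)•1 − h`, so `h·h' = det(h)·1`
(for 2×2 matrices this is `Matrix.adjugate`). -/
def adj2 (x : Matrix (Fin 2) (Fin 2) k) : Matrix (Fin 2) (Fin 2) k :=
  (Matrix.trace x) • (1 : Matrix (Fin 2) (Fin 2) k) - x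

/-- Cayley–Dickson multiplication:
`(x₁,y₁)(x₂,y₂) = (x₁x₂ + γ·y₂'y₁, y₂x₁ + y₁x₂')`. -/
def omul (γ : k) (z₁ z₂ : Oct k) : Oct k :=
  (z₁.1 * z₂.1 + γ • (adj2 z₂.2 * z₁.2), z₂.2 * z₁.1 + z₁.2 * adj2 z₂.1)

/-- Octonion conjugation `(x,y)* = (x', −y)`. -/
def oconj (z : Oct k) : Oct k := (adj2 z.1, -z.2)

/-- Octonion norm `n_Θ(x,y) = det x − γ·det y`. -/
def onorm (γ : k) (z : Oct k) : k := z.1.det - γ * z.2.det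

/-- Octonion trace `tr_Θ(x,y) = tr(x)`. -/
def otr (z : Oct k) : k := Matrix.trace z.1

/-- The octonion unit `1 = (1,0)`. -/
def oone : Oct k := ((1 : Matrix (Fin 2) (Fin 2) k), 0)

/-- The triality trilinear form `(x,y,z) = tr_Θ((x·y)·z)`. -/
def trilForm (γ : k) (x y z : Oct k) : k := otr (omul γ (omul γ x y) z)

/-- `g` is a similitude of the norm with similitude factor `ν`. -/
def IsSimil (γ : k) (g : Oct k → Oct k) (ν : k) : Prop :=
  ∀ x, onorm γ (g x) = ν * onorm γ x

/-- The norm bilinear form (γ = 1): `B(z,w) = n(z+w) − n(z) − n(w)`. -/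
def Bform (z w : Oct k) : k :=
  onorm 1 (z + w) - onorm 1 z - onorm 1 w

/-- The trace-zero projection `Im(u) = u − (tr u / 2)·1`. -/
def oIm [CharZero k] (z : Oct k) : Oct k := z - (otr z / 2) • (oone : Oct k)

/-- ε₁ = (E₁₁,0). -/
def zeps₁ : Oct k := (Matrix.single 0 0 (1 : k), 0)

/-- e₃ = (E₁₂,0). -/
def ze₃ : Oct k := (Matrix.single 0 1 (1 : k), 0)

/-- e₃* = (E₂₁,0), the dual partner of e₃ (B(e₃*,e₃) = −1). -/
def ze₃s : Oct k := (Matrix.single 1 0 (1 : k), 0)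

/-- The endomorphism `X = ε₁ ∧ e₃*` of Θ: `z ↦ B(e₃*,z)·ε₁ − B(ε₁,z)·e₃*`. -/
def Xop (z : Oct k) : Oct k := Bform ze₃s z • zeps₁ - Bform zeps₁ z • ze₃s


lemma det_fin2 (A : Matrix (Fin 2) (Fin 2) k) : A.det = A 0 0 * A 1 1 - A 0 1 * A 1 0 :=
  Matrix.det_fin_two A

lemma Bform_eq (z w : Oct k) :
    Bform z w = z.1 0 0 * w.1 1 1 + w.1 0 0 * z.1 1 1 - z.1 0 1 * w.1 1 0 - w.1 0 1 * z.1 1 0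
      - (z.2 0 0 * w.2 1 1 + w.2 0 0 * z.2 1 1 - z.2 0 1 * w.2 1 0 - w.2 0 1 * z.2 1 0) := by
  simp only [Bform, onorm, det_fin2, Prod.fst_add, Prod.snd_add, Matrix.add_apply]
  ring

lemma Bform_eps (z : Oct k) : Bform z zeps₁ = z.1 1 1 := by
  simp [Bform_eq, zeps₁, Matrix.single]

lemma Bform_e3 (z : Oct k) : Bform z ze₃ = -(z.1 1 0) := by
  simp [Bform_eq, ze₃, Matrix.single]

lemma Bform_eps' (z : Oct k) : Bform zeps₁ z = z.1 1 1 := by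
  simp [Bform_eq, zeps₁, Matrix.single]

lemma Bform_e3s (z : Oct k) : Bform ze₃s z = -(z.1 0 1) := by
  simp [Bform_eq, ze₃s, Matrix.single]

lemma Xop_eq (z : Oct k) : Xop z = (-(z.1 0 1)) • zeps₁ - (z.1 1 1) • ze₃s := by
  rw [Xop, Bform_eps', Bform_e3s]

theorem nonnull_orbit_unipotent [CharZero k] :
    -- X ∈ K = ker κ : Im(ε₁·(e₃*)*) = 0:
    (oIm (omul 1 zeps₁ (oconj ze₃s)) = (0 : Oct k)) ∧
    -- X annihilates e₁, e₂, e₁*, e₂* (the four remaining basis vectors) and ε₁: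
    (Xop ((0, Matrix.single 0 0 (1 : k)) : Oct k) = 0) ∧
    (Xop ((0, Matrix.single 0 1 (1 : k)) : Oct k) = 0) ∧
    (Xop ((0, Matrix.single 1 0 (1 : k)) : Oct k) = 0) ∧
    (Xop ((0, Matrix.single 1 1 (1 : k)) : Oct k) = 0) ∧
    (Xop (zeps₁ : Oct k) = 0) ∧
    -- X(e₃) = −ε₁:
    (Xop (ze₃ : Oct k) = -zeps₁) ∧
    -- X is nilpotent: X² = 0:
    (∀ z : Oct k, Xop (Xop z) = 0) ∧
    -- X maps W^⊥ into W, i.e. exp(xX) acts as the identity on W^⊥/W: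
    (∀ z : Oct k, Bform z zeps₁ = 0 → Bform z ze₃ = 0 →
      Xop z ∈ Submodule.span k {(zeps₁ : Oct k), ze₃}) := by
  refine ⟨?_, ?_, ?_, ?_, ?_, ?_, ?_, ?_, ?_⟩
  · -- Im(ε₁·(e₃*)*) = 0
    simp only [oIm, omul, oconj, adj2, zeps₁, ze₃s, otr, oone, Prod.ext_iff]
    constructor
    · ext i j; fin_cases i <;> fin_cases j <;>
        simp [Matrix.single, Matrix.trace, Matrix.diag, Matrix.mul_apply,
          Fin.sum_univ_two, Matrix.one_apply, Prod.fst_add, Prod.snd_add] <;>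
        first
          | rfl
          | (rw [show Finset.filter (fun x : Fin 2 => 1 = x ∧ 0 = x) Finset.univ = ∅ by decide]
             simp)
    · simp [Matrix.single]
  · simp [Xop_eq]
  · simp [Xop_eq]
  · simp [Xop_eq]
  · simp [Xop_eq]
  · simp [Xop_eq, zeps₁, Matrix.single]
  · simp [Xop_eq, ze₃, Matrix.single]
  · intro z
    simp [Xop_eq, zeps₁, ze₃s, Matrix.single, smul_smul]
  · intro z h1 h2
    rw [Xop_eq, Bform_eps] at *
    rw [h1]
    simp only [zero_smul, sub_zero]
    exact Submodule.smul_mem _ _ (Submodule.subset_span (Set.mem_insert _ _))
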